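/- The Gaussian lattice L_z has exactly 36 involutive anti-isometries. -/

import Mathlib

/-- The imaginary unit `i` in the Gaussian integers `ℤ[i]`. -/
def gi : GaussianInt := Zsqrtd.sqrtd

/-- The underlying `ℤ[i]`-module of the Gaussian lattice `L_z`. -/
abbrev Lz : Type := GaussianInt × GaussianInt

/-- The Hermitian form of `L_z`, given by the matrix `[[-2, 1-i], [1+i, -2]]`;
conjugate-linear in the first argument, linear in the second. -/
def hz (x y : Lz) : GaussianInt :=
  star x.1 * (-2) * y.1 + star x.1 * (1 - gi) * y.2 +
    star x.2 * (1 + gi) * y.1 + star x.2 * (-2) * y.2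

/-- An isometry of `L_z`: a `ℤ[i]`-linear bijection preserving the form `hz`. -/
def IsIsomLz (A : Lz → Lz) : Prop :=
  Function.Bijective A ∧ (∀ x y : Lz, A (x + y) = A x + A y) ∧
    (∀ (c : GaussianInt) (x : Lz), A (c • x) = c • A x) ∧
    ∀ x y : Lz, hz (A x) (A y) = hz x y

/-- An involutive anti-isometry of `L_z`: an additive bijection `ν` with
`ν (c • v) = c̄ • ν v`, `hz (ν x) (ν y) = conj (hz x y)` and `ν ∘ ν = id`. -/
def IsInvAntiIsomLz (ν : Lz → Lz) : Prop :=
  Function.Bijective ν ∧ (∀ x y : Lz, ν (x + y) = ν x + ν y) ∧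
    (∀ (c : GaussianInt) (x : Lz), ν (c • x) = star c • ν x) ∧
    (∀ x y : Lz, hz (ν x) (ν y) = star (hz x y)) ∧
    ∀ x : Lz, ν (ν x) = x

/-- The anti-isometry `κ₁ : (x₁, x₂) ↦ (−x̄₂, −x̄₁)` of `L_z`. -/
def kappa1 (x : Lz) : Lz := (-(star x.2), -(star x.1))

/-- The anti-isometry `κ₃ : (x₁, x₂) ↦ (i·x̄₁, −x̄₂)` of `L_z`. -/
def kappa3 (x : Lz) : Lz := (gi * star x.1, -(star x.2))

/-! ### Auxiliary definitions and lemmas -/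

noncomputable def giSet : Finset GaussianInt :=
  ((Finset.Icc (-1:ℤ) 1) ×ˢ (Finset.Icc (-1:ℤ) 1)).image (fun p => ⟨p.1, p.2⟩)

noncomputable def cand : Finset Lz := giSet ×ˢ giSet

noncomputable def Vset : Finset Lz := cand.filter (fun v => hz v v = -2)

def Econd (p : Lz × Lz) : Prop :=
  hz p.1 p.1 = -2 ∧ hz p.1 p.2 = 1 + gi ∧ hz p.2 p.1 = 1 - gi ∧ hz p.2 p.2 = -2 ∧
    star p.1.1 • p.1 + star p.1.2 • p.2 = ((1,0) : Lz) ∧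
    star p.2.1 • p.1 + star p.2.2 • p.2 = ((0,1) : Lz)

instance : DecidablePred Econd := fun p => by unfold Econd; infer_instance

noncomputable def Tset : Finset (Lz × Lz) := (Vset ×ˢ Vset).filter Econd

def Phi (p : Lz × Lz) (x : Lz) : Lz := star x.1 • p.1 + star x.2 • p.2

lemma star_gi : star gi = -gi := by decide

lemma int_bd (x : ℤ) (hx : x^2 ≤ 3) : -1 ≤ x ∧ x ≤ 1 := by
  constructor
  · by_contra h; push_neg at h; nlinarith
  · by_contra h; push_neg at h; nlinarith

lemma mem_Vset (v : Lz) (hv : hz v v = -2) : v ∈ Vset := by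
  obtain ⟨⟨a1,a2⟩,⟨c1,c2⟩⟩ := v
  have h := congrArg Zsqrtd.re hv
  simp [hz, gi, Zsqrtd.re_mul, Zsqrtd.im_mul, Zsqrtd.star_mk] at h
  have hb : a1^2+a2^2+c1^2+c2^2 ≤ 3 := by
    nlinarith [sq_nonneg (a1*c1+a2*c2 - (a1*c2-a2*c1)),
      sq_nonneg (a1^2+a2^2-c1^2-c2^2), sq_nonneg (a1^2+a2^2+c1^2+c2^2-3),
      sq_nonneg (a1*c2-a2*c1), sq_nonneg (a1*c1+a2*c2)]
  have h1 := int_bd a1 (by nlinarith)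
  have h2 := int_bd a2 (by nlinarith)
  have h3 := int_bd c1 (by nlinarith)
  have h4 := int_bd c2 (by nlinarith)
  refine Finset.mem_filter.2 ⟨Finset.mem_product.2 ⟨?_, ?_⟩, hv⟩
  · exact Finset.mem_image.2 ⟨(a1, a2),
      Finset.mem_product.2 ⟨Finset.mem_Icc.2 h1, Finset.mem_Icc.2 h2⟩, rfl⟩
  · exact Finset.mem_image.2 ⟨(c1, c2),
      Finset.mem_product.2 ⟨Finset.mem_Icc.2 h3, Finset.mem_Icc.2 h4⟩, rfl⟩

lemma Phi_inj : Function.Injective Phi := by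
  intro p q h
  have h1 := congrFun h (1,0)
  have h2 := congrFun h (0,1)
  simp [Phi] at h1 h2
  exact Prod.ext h1 h2

lemma backward {p : Lz × Lz} (hp : Econd p) : IsInvAntiIsomLz (Phi p) := by
  obtain ⟨⟨a,c⟩,⟨b,d⟩⟩ := p
  obtain ⟨e11, e12, e21, e22, i1, i2⟩ := hp
  simp only [hz] at e11 e12 e21 e22
  simp only [Prod.ext_iff, Prod.fst_add, Prod.snd_add, Prod.smul_fst, Prod.smul_snd,
    smul_eq_mul] at i1 i2
  have hinv : ∀ x : Lz, Phi ((a,c),(b,d)) (Phi ((a,c),(b,d)) x) = x := by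
    intro x
    refine Prod.ext ?_ ?_ <;>
      simp only [Phi, Prod.fst_add, Prod.snd_add, Prod.smul_fst, Prod.smul_snd,
        smul_eq_mul, star_add, star_mul, star_star]
    · linear_combination x.1 * i1.1 + x.2 * i2.1
    · linear_combination x.1 * i1.2 + x.2 * i2.2
  refine ⟨Function.Involutive.bijective hinv, ?_, ?_, ?_, hinv⟩
  · intro x y
    refine Prod.ext ?_ ?_ <;>
      simp only [Phi, Prod.fst_add, Prod.snd_add, Prod.smul_fst, Prod.smul_snd,
        smul_eq_mul, star_add] <;> ring
  · intro cc x
    refine Prod.ext ?_ ?_ <;>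
      simp only [Phi, Prod.fst_add, Prod.snd_add, Prod.smul_fst, Prod.smul_snd,
        smul_eq_mul, star_mul] <;> ring
  · intro x y
    simp only [Phi, hz, Prod.fst_add, Prod.snd_add, Prod.smul_fst, Prod.smul_snd,
      smul_eq_mul, star_add, star_mul, star_star, star_sub, star_one, star_neg,
      star_ofNat, star_gi]
    linear_combination x.1 * star y.1 * e11 + x.1 * star y.2 * e12 +
      x.2 * star y.1 * e21 + x.2 * star y.2 * e22

lemma forward {ν : Lz → Lz} (h : IsInvAntiIsomLz ν) : ∃ p ∈ Tset, Phi p = ν := by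
  obtain ⟨hbij, hadd, hsmul, hform, hinv⟩ := h
  have hrep : ν = Phi (ν (1,0), ν (0,1)) := by
    funext x
    have hx : x = x.1 • ((1,0):Lz) + x.2 • ((0,1):Lz) := by
      refine Prod.ext ?_ ?_ <;>
        simp [Prod.smul_fst, Prod.smul_snd, smul_eq_mul]
    calc ν x = ν (x.1 • ((1,0):Lz) + x.2 • ((0,1):Lz)) := by rw [← hx]
    _ = star x.1 • ν (1,0) + star x.2 • ν (0,1) := by rw [hadd, hsmul, hsmul]
    _ = Phi (ν (1,0), ν (0,1)) x := rfl
  have e11 : hz (ν (1,0)) (ν (1,0)) = -2 := by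
    have := hform (1,0) (1,0)
    rwa [show star (hz ((1,0):Lz) (1,0)) = -2 from by decide] at this
  have e12 : hz (ν (1,0)) (ν (0,1)) = 1 + gi := by
    have := hform (1,0) (0,1)
    rwa [show star (hz ((1,0):Lz) (0,1)) = 1 + gi from by decide] at this
  have e21 : hz (ν (0,1)) (ν (1,0)) = 1 - gi := by
    have := hform (0,1) (1,0)
    rwa [show star (hz ((0,1):Lz) (1,0)) = 1 - gi from by decide] at this
  have e22 : hz (ν (0,1)) (ν (0,1)) = -2 := by
    have := hform (0,1) (0,1)
    rwa [show star (hz ((0,1):Lz) (0,1)) = -2 from by decide] at this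
  have i1 : star (ν (1,0)).1 • ν (1,0) + star (ν (1,0)).2 • ν (0,1) = ((1,0):Lz) := by
    have h1 : Phi (ν (1,0), ν (0,1)) (ν (1,0)) = (1,0) := by rw [← hrep]; exact hinv (1,0)
    simpa [Phi] using h1
  have i2 : star (ν (0,1)).1 • ν (1,0) + star (ν (0,1)).2 • ν (0,1) = ((0,1):Lz) := by
    have h2 : Phi (ν (1,0), ν (0,1)) (ν (0,1)) = (0,1) := by rw [← hrep]; exact hinv (0,1)
    simpa [Phi] using h2
  exact ⟨(ν (1,0), ν (0,1)),
    Finset.mem_filter.2 ⟨Finset.mem_product.2 ⟨mem_Vset _ e11, mem_Vset _ e22⟩,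
      ⟨e11, e12, e21, e22, i1, i2⟩⟩, hrep.symm⟩

/-- The Gaussian lattice `L_z` has exactly `36` involutive
anti-isometries. -/
theorem stmt9 : {ν : Lz → Lz | IsInvAntiIsomLz ν}.ncard = 36 := by
  have hset : {ν : Lz → Lz | IsInvAntiIsomLz ν} = Phi '' (Tset : Set (Lz × Lz)) := by
    ext ν
    simp only [Set.mem_setOf_eq, Set.mem_image, Finset.mem_coe]
    constructor
    · intro h
      obtain ⟨p, hp, hpe⟩ := forward h
      exact ⟨p, hp, hpe⟩
    · rintro ⟨p, hp, rfl⟩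
      exact backward (Finset.mem_filter.1 hp).2
  rw [hset, Set.ncard_image_of_injective _ Phi_inj, Set.ncard_coe_finset]
  decide
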